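/- Let p be a prime number, n a positive integer, k a perfect field of characteristic p, and W = W_n(k) the ring of p-typical Witt vectors of k of length n. Let B be a smooth W-algebra and A an algebra over the polynomial ring B[T] which is étale over B[T]; let t ∈ A denote the image of T. Then for every integer i ≥ 1 and every element ω of the i-th exterior power Ω^i_{A/W} := ⋀^i_A Ω_{A/W} of the module of Kähler differentials, the following are equivalent: (i) ω ∧ dt ∈ t · Ω^{i+1}_{A/W}; (ii) ω ∈ t · Ω^i_{A/W} + { η ∧ dt : η ∈ Ω^{i−1}_{A/W} }, i.e., ω can be written as t·ω₁ + ω₂ ∧ dt with ω₁ ∈ Ω^i_{A/W} and ω₂ ∈ Ω^{i−1}_{A/W}. -/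

import Mathlib

open scoped TensorProduct


open CliffordAlgebra in
private lemma contractRight_mem_pow {R : Type*} [CommRing R] {M : Type*} [AddCommGroup M]
    [Module R M] (d : Module.Dual R M) {m : ℕ}
    {x : ExteriorAlgebra R M}
    (hx : x ∈ (LinearMap.range (ExteriorAlgebra.ι R :
        M →ₗ[R] ExteriorAlgebra R M)) ^ m) :
    contractRight x d ∈ (LinearMap.range (ExteriorAlgebra.ι R :
        M →ₗ[R] ExteriorAlgebra R M)) ^ (m - 1) ∧ (m = 0 → contractRight x d = 0) := by
  induction hx using Submodule.pow_induction_on_right' with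
  | algebraMap r =>
    refine ⟨?_, fun _ => ?_⟩ <;> simp [contractRight_algebraMap]
  | add x y i hx hy ihx ihy =>
    refine ⟨by simpa using add_mem ihx.1 ihy.1, fun hi => by simp [ihx.2 hi, ihy.2 hi]⟩
  | mul_mem i x hx ih v hv =>
    obtain ⟨v, rfl⟩ := hv
    refine ⟨?_, fun h => by omega⟩
    rw [Nat.succ_sub_one, contractRight_mul_ι]
    refine sub_mem (Submodule.smul_mem _ _ hx) ?_
    rcases Nat.eq_zero_or_pos i with rfl | hi
    · rw [ih.2 rfl, zero_mul]; exact zero_mem _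
    · obtain ⟨j, rfl⟩ := Nat.exists_eq_add_of_le hi
      have := ih.1
      rw [Nat.add_comm 1 j, Nat.add_sub_cancel] at this
      rw [Nat.add_comm 1 j, pow_succ]
      exact Submodule.mul_mem_mul this (LinearMap.mem_range_self _ _)


private theorem exists_deriv
    (W : Type*) [CommRing W]
    (B : Type u) [CommRing B] [Algebra W B]
    (A : Type u) [CommRing A] [Algebra (Polynomial B) A] [Algebra B A] [Algebra W A]
    [IsScalarTower W B A] [IsScalarTower B (Polynomial B) A]
    [Algebra.FormallySmooth (Polynomial B) A] :
    ∃ δ : Derivation W A A, δ (algebraMap (Polynomial B) A Polynomial.X) = 1 := by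
  classical
  set t : A := algebraMap (Polynomial B) A Polynomial.X with ht
  set f : B →+* TrivSqZeroExt A A := (TrivSqZeroExt.inlHom A A).comp (algebraMap B A) with hf
  set x0 : TrivSqZeroExt A A := TrivSqZeroExt.inl t + TrivSqZeroExt.inr 1 with hx0
  set g : Polynomial B →+* TrivSqZeroExt A A := Polynomial.eval₂RingHom f x0 with hg
  letI : Algebra (Polynomial B) (TrivSqZeroExt A A) := g.toAlgebra
  have halg : ∀ q : Polynomial B,
      algebraMap (Polynomial B) A q = Polynomial.eval₂ (algebraMap B A) t q := by
    intro q
    have h1 : (IsScalarTower.toAlgHom B (Polynomial B) A) = Polynomial.aeval t := by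
      apply Polynomial.algHom_ext
      simp [ht]
    have h2 : algebraMap (Polynomial B) A q = (IsScalarTower.toAlgHom B (Polynomial B) A) q := rfl
    rw [h2, h1, Polynomial.aeval_def]
  have hfst : ∀ z : TrivSqZeroExt A A, (TrivSqZeroExt.fstHom A A A) z = z.fst := fun _ => rfl
  let F : TrivSqZeroExt A A →ₐ[Polynomial B] A :=
    { toFun := TrivSqZeroExt.fst
      map_one' := by simp
      map_mul' := by intro x y; simp [TrivSqZeroExt.fst_mul]
      map_zero' := by simp
      map_add' := by intro x y; simp [TrivSqZeroExt.fst_add]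
      commutes' := by
        intro q
        show TrivSqZeroExt.fst (g q) = algebraMap (Polynomial B) A q
        have h2 := Polynomial.hom_eval₂ q f ((TrivSqZeroExt.fstHom A A A : _) : TrivSqZeroExt A A →+* A) x0
        have h3 : (((TrivSqZeroExt.fstHom A A A : _) : TrivSqZeroExt A A →+* A)).comp f
            = algebraMap B A := by
          ext a; simp [hf]
        have h4 : ((TrivSqZeroExt.fstHom A A A : _) : TrivSqZeroExt A A →+* A) x0 = t := by
          simp [hx0]
        rw [halg]
        have h5 : (Polynomial.eval₂ f x0 q).fst = Polynomial.eval₂ (algebraMap B A) t q := by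
          simpa [h3, h4] using h2
        exact h5 }
  have hFsurj : Function.Surjective F := fun a => ⟨TrivSqZeroExt.inl a, rfl⟩
  have hnil : IsNilpotent (RingHom.ker (F : TrivSqZeroExt A A →+* A)) := by
    refine ⟨2, ?_⟩
    rw [show (RingHom.ker (F : TrivSqZeroExt A A →+* A)) ^ 2
        = RingHom.ker (F : TrivSqZeroExt A A →+* A) * RingHom.ker (F : TrivSqZeroExt A A →+* A)
      from pow_two _, Ideal.zero_eq_bot, eq_bot_iff]
    refine Ideal.mul_le.mpr fun x hx y hy => ?_
    have hx' : TrivSqZeroExt.fst x = 0 := hx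
    have hy' : TrivSqZeroExt.fst y = 0 := hy
    rw [Ideal.mem_bot]
    apply TrivSqZeroExt.ext <;>
      simp [TrivSqZeroExt.fst_mul, TrivSqZeroExt.snd_mul, hx', hy']
  let l := Algebra.FormallySmooth.liftOfSurjective (AlgHom.id (Polynomial B) A) F hFsurj hnil
  have hl : ∀ a : A, (l a).fst = a := fun a =>
    Algebra.FormallySmooth.liftOfSurjective_apply (AlgHom.id (Polynomial B) A) F hFsurj hnil a
  have hlC : ∀ q : Polynomial B, l (algebraMap (Polynomial B) A q) = g q := fun q => l.commutes q
  have hsmul : ∀ (w : W) (a : A), (l (w • a)).snd = w • (l a).snd := by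
    intro w a
    have h1 : w • a = algebraMap B A (algebraMap W B w) * a := by
      rw [← IsScalarTower.algebraMap_apply, Algebra.smul_def]
    have h2 : l (algebraMap B A (algebraMap W B w))
        = TrivSqZeroExt.inl (algebraMap B A (algebraMap W B w)) := by
      have h3 : algebraMap B A (algebraMap W B w)
          = algebraMap (Polynomial B) A (Polynomial.C (algebraMap W B w)) := by
        rw [IsScalarTower.algebraMap_apply B (Polynomial B) A]
        norm_num [Polynomial.algebraMap_eq]
      rw [h3, hlC]
      show Polynomial.eval₂ f x0 _ = _
      rw [Polynomial.eval₂_C]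
      simp [hf, h3]
    rw [h1, map_mul, h2, TrivSqZeroExt.snd_mul]
    simp [Algebra.smul_def, IsScalarTower.algebraMap_apply W B A, smul_eq_mul]
  let L : A →ₗ[W] A :=
    { toFun := fun a => (l a).snd
      map_add' := by intro a b; simp
      map_smul' := by intro w a; simpa using hsmul w a }
  have hone : L 1 = 0 := by simp [L]
  have hleib : ∀ a b : A, L (a * b) = a • L b + b • L a := by
    intro a b
    show (l (a * b)).snd = a • (l b).snd + b • (l a).snd
    rw [map_mul, TrivSqZeroExt.snd_mul, hl, hl]
    simp [smul_eq_mul, mul_comm]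
  refine ⟨{ toLinearMap := L, map_one_eq_zero' := hone, leibniz' := hleib }, ?_⟩
  show (l t).snd = 1
  rw [ht, hlC]
  show (Polynomial.eval₂ f x0 Polynomial.X).snd = 1
  simp [hx0]



/-- Let `k` be a perfect field of characteristic `p`, `W = W_n(k)` the ring of
`p`-typical Witt vectors of length `n > 0`, `B` a smooth `W`-algebra and `A`
étale over the polynomial ring `B[T]`, with `t ∈ A` the image of `T`.
For `i ≥ 1` and `ω` in the `i`-th exterior power of `Ω[A⁄W]` (realized as the
`i`-th graded piece `(range ι)^i` of the exterior algebra on `Ω[A⁄W]`),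
the following are equivalent:
(i) `ω ∧ dt ∈ t • Ω^{i+1}`;
(ii) `ω = t • ω₁ + ω₂ ∧ dt` for some `ω₁ ∈ Ω^i`, `ω₂ ∈ Ω^{i-1}`. -/
theorem wedge_dlog_criterion
    (p : ℕ) [Fact p.Prime] (n : ℕ) (hn : 0 < n)
    (k : Type u) [Field k] [CharP k p] [PerfectRing k p]
    (B : Type u) [CommRing B] [Algebra (TruncatedWittVector p n k) B]
    [Algebra.Smooth (TruncatedWittVector p n k) B]
    (A : Type u) [CommRing A] [Algebra (Polynomial B) A] [Algebra B A]
    [Algebra (TruncatedWittVector p n k) A]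
    [IsScalarTower (TruncatedWittVector p n k) B A]
    [IsScalarTower B (Polynomial B) A]
    [Algebra.Etale (Polynomial B) A]
    (i : ℕ) (hi : 1 ≤ i)
    (ω : ExteriorAlgebra A (Ω[A⁄TruncatedWittVector p n k]))
    (hω : ω ∈ (LinearMap.range (ExteriorAlgebra.ι A :
        Ω[A⁄TruncatedWittVector p n k] →ₗ[A]
          ExteriorAlgebra A (Ω[A⁄TruncatedWittVector p n k]))) ^ i) :
    (∃ η ∈ (LinearMap.range (ExteriorAlgebra.ι A :
          Ω[A⁄TruncatedWittVector p n k] →ₗ[A]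
            ExteriorAlgebra A (Ω[A⁄TruncatedWittVector p n k]))) ^ (i + 1),
        ω * ExteriorAlgebra.ι A
            (KaehlerDifferential.D (TruncatedWittVector p n k) A
              (algebraMap (Polynomial B) A Polynomial.X)) =
          algebraMap (Polynomial B) A Polynomial.X • η) ↔
      (∃ ω₁ ∈ (LinearMap.range (ExteriorAlgebra.ι A :
            Ω[A⁄TruncatedWittVector p n k] →ₗ[A]
              ExteriorAlgebra A (Ω[A⁄TruncatedWittVector p n k]))) ^ i,
        ∃ ω₂ ∈ (LinearMap.range (ExteriorAlgebra.ι A :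
            Ω[A⁄TruncatedWittVector p n k] →ₗ[A]
              ExteriorAlgebra A (Ω[A⁄TruncatedWittVector p n k]))) ^ (i - 1),
        ω = algebraMap (Polynomial B) A Polynomial.X • ω₁ +
          ω₂ * ExteriorAlgebra.ι A
            (KaehlerDifferential.D (TruncatedWittVector p n k) A
              (algebraMap (Polynomial B) A Polynomial.X))) := by
  classical
  set W := TruncatedWittVector p n k
  haveI hFE : Algebra.FormallyEtale (Polynomial B) A :=
    (inferInstance : Algebra.Etale (Polynomial B) A).formallyEtale
  haveI : Algebra.FormallySmooth (Polynomial B) A := inferInstance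
  obtain ⟨δ, hδ⟩ := exists_deriv W B A
  set t : A := algebraMap (Polynomial B) A Polynomial.X with ht
  set φ : Module.Dual A (Ω[A⁄W]) := δ.liftKaehlerDifferential with hφdef
  have hφ : φ (KaehlerDifferential.D W A t) = 1 := by
    rw [hφdef, Derivation.liftKaehlerDifferential_comp_D]; exact hδ
  set dt : ExteriorAlgebra A (Ω[A⁄W]) :=
    ExteriorAlgebra.ι A (KaehlerDifferential.D W A t) with hdt
  set P : Submodule A (ExteriorAlgebra A (Ω[A⁄W])) :=
    LinearMap.range (ExteriorAlgebra.ι A :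
      Ω[A⁄W] →ₗ[A] ExteriorAlgebra A (Ω[A⁄W])) with hP
  constructor
  · rintro ⟨η, hη, heq⟩
    have hmem1 : CliffordAlgebra.contractRight η φ ∈ P ^ i := by
      have := (contractRight_mem_pow φ hη).1
      simpa using this
    have hmem2 : CliffordAlgebra.contractRight ω φ ∈ P ^ (i - 1) :=
      (contractRight_mem_pow φ hω).1
    refine ⟨CliffordAlgebra.contractRight η φ, hmem1,
      CliffordAlgebra.contractRight ω φ, hmem2, ?_⟩
    have h2 : CliffordAlgebra.contractRight (ω * dt) φ
        = ω - CliffordAlgebra.contractRight ω φ * dt := by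
      rw [hdt, CliffordAlgebra.contractRight_mul_ι, hφ, one_smul]
    have h3 : CliffordAlgebra.contractRight (t • η) φ
        = t • CliffordAlgebra.contractRight η φ := by
      rw [map_smul]; rfl
    rw [heq, h3] at h2
    exact (sub_eq_iff_eq_add.mp h2.symm)
  · rintro ⟨ω₁, h1, ω₂, h2, rfl⟩
    refine ⟨ω₁ * dt, ?_, ?_⟩
    · rw [pow_succ]
      exact Submodule.mul_mem_mul h1 (LinearMap.mem_range_self _ _)
    · rw [add_mul, smul_mul_assoc, mul_assoc, hdt, ExteriorAlgebra.ι_sq_zero,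
        mul_zero, add_zero]
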